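/- The induction rule (R3) is sound: if φ ⊃ K_G(ψ ∧ φ) is valid in a group frame, then φ ⊃ K*_G ψ is valid in that frame. -/
import Mathlib

inductive Fm (V Ag : Type) : Type
  | var : V → Fm V Ag
  | snot : Fm V Ag → Fm V Ag
  | and : Fm V Ag → Fm V Ag → Fm V Ag
  | or : Fm V Ag → Fm V Ag → Fm V Ag
  | imp : Fm V Ag → Fm V Ag → Fm V Ag
  | K : Set Ag → Fm V Ag → Fm V Ag
  | Ks : Set Ag → Fm V Ag → Fm V Ag

/-- A group frame: reflexive epistemic relations and a Routley star of period two. -/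
structure GroupFrame (S Ag : Type) where
  R : Ag → S → S → Prop
  refl : ∀ a x, R a x x
  star : S → S
  star_star : ∀ x, star (star x) = x

/-- `R_G`: union of the relations of the agents in `G`. -/
def RG {S Ag : Type} (F : GroupFrame S Ag) (G : Set Ag) (x y : S) : Prop :=
  ∃ a ∈ G, F.R a x y

/-- Satisfaction in a group model. -/
def sat {S Ag V : Type} (F : GroupFrame S Ag) (v : V → Set S) : S → Fm V Ag → Prop
  | x, .var p => x ∈ v p
  | x, .snot φ => ¬ sat F v (F.star x) φ
  | x, .and φ ψ => sat F v x φ ∧ sat F v x ψ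
  | x, .or φ ψ => sat F v x φ ∨ sat F v x ψ
  | x, .imp φ ψ => sat F v x φ → sat F v x ψ
  | x, .K G φ => ∀ y, RG F G x y → sat F v y φ
  | x, .Ks G φ => ∀ y, Relation.ReflTransGen (RG F G) x y → sat F v y φ

/-- Validity in a group frame: satisfaction at every situation under every valuation. -/
def valid {S Ag V : Type} (F : GroupFrame S Ag) (φ : Fm V Ag) : Prop :=
  ∀ (v : V → Set S) (x : S), sat F v x φ

/-- the induction rule (R3) is sound. -/
theorem stmt8 {S Ag V : Type} (F : GroupFrame S Ag) (G : Set Ag) (hG : G.Nonempty)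
    (φ ψ : Fm V Ag)
    (h : valid F (Fm.imp φ (Fm.K G (Fm.and ψ φ)))) :
    valid F (Fm.imp φ (Fm.Ks G ψ)) := by
  intro v x
  simp only [sat]
  intro hφ y hy
  -- strengthen: φ holds along the path, then ψ at endpoint
  have key : ∀ y, Relation.ReflTransGen (RG F G) x y → sat F v y φ := by
    intro y hy
    induction hy with
    | refl => exact hφ
    | tail hab hbc ih => exact (h v _ ih _ hbc).2
  obtain ⟨a, ha⟩ := hG
  exact (h v y (key y hy) y ⟨a, ha, F.refl a y⟩).1
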